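/- arXiv:2603.05609 — 3 statements merged into one kernel-verified Lean document; each statement's English description precedes it below -/
import Mathlib

section
/- Let ℓ be an even natural number and let E_ℓ(x) = Σ_{j=0}^{ℓ} x^j / j! denote the truncated exponential. Then for every real number x one has E_ℓ(x) · E_ℓ(−x) ≥ 1. -/
open Finset

private noncomputable def Etr (ℓ : ℕ) : ℝ → ℝ :=
  fun y => ∑ j ∈ range (ℓ + 1), y ^ j / (Nat.factorial j)

private lemma Etr_hasDerivAt (ℓ : ℕ) (y : ℝ) :
    HasDerivAt (Etr ℓ) (∑ j ∈ range ℓ, y ^ j / (Nat.factorial j)) y := by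
  have h : HasDerivAt (Etr ℓ)
      (∑ j ∈ range (ℓ + 1), (j : ℝ) * y ^ (j - 1) / (Nat.factorial j)) y := by
    apply HasDerivAt.fun_sum
    intro j _
    simpa [div_eq_mul_inv, mul_comm, mul_assoc] using
      ((hasDerivAt_pow j y).div_const (Nat.factorial j : ℝ))
  convert h using 1
  rw [Finset.sum_range_succ']
  simp only [Nat.cast_zero, zero_mul, zero_div, add_zero]
  apply Finset.sum_congr rfl
  intro i _
  have : (Nat.factorial (i + 1) : ℝ) = (i + 1) * Nat.factorial i := by
    rw [Nat.factorial_succ]; push_cast; ring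
  rw [this]
  have h1 : ((i : ℝ) + 1) ≠ 0 := by positivity
  have h2 : (Nat.factorial i : ℝ) ≠ 0 := by positivity
  field_simp
  simp only [Nat.add_sub_cancel_left, Nat.add_sub_cancel]
  push_cast
  ring

private lemma Etr_zero (ℓ : ℕ) : Etr ℓ 0 = 1 := by
  unfold Etr
  rw [Finset.sum_eq_single 0]
  · simp
  · intro j _ hj
    simp [zero_pow hj]
  · simp

theorem truncated_exp_product_ge_one (ℓ : ℕ) (hℓ : Even ℓ) (x : ℝ) :
    1 ≤ (∑ j ∈ Finset.range (ℓ + 1), x ^ j / (Nat.factorial j)) *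
        (∑ j ∈ Finset.range (ℓ + 1), (-x) ^ j / (Nat.factorial j)) := by
  set f : ℝ → ℝ := fun y => Etr ℓ y * Etr ℓ (-y) with hf
  set D : ℝ → ℝ := fun y => ∑ j ∈ range ℓ, y ^ j / (Nat.factorial j) with hD
  have hfd : ∀ y : ℝ, HasDerivAt f (D y * Etr ℓ (-y) + Etr ℓ y * (D (-y) * (-1))) y := by
    intro y
    exact (Etr_hasDerivAt ℓ y).mul ((Etr_hasDerivAt ℓ (-y)).comp y (hasDerivAt_neg y))
  -- derivative simplification
  have hsplit : ∀ y : ℝ, Etr ℓ y = D y + y ^ ℓ / Nat.factorial ℓ := by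
    intro y
    unfold Etr
    rw [Finset.sum_range_succ]
  have hderiv_eq : ∀ y : ℝ, D y * Etr ℓ (-y) + Etr ℓ y * (D (-y) * (-1))
      = y ^ ℓ / Nat.factorial ℓ * (D y - D (-y)) := by
    intro y
    rw [hsplit y, hsplit (-y), hℓ.neg_pow]
    ring
  have hmain : ∀ y : ℝ, 0 ≤ y → 1 ≤ f y := by
    intro y hy
    have hmono : MonotoneOn f (Set.Ici (0 : ℝ)) := by
      apply monotoneOn_of_deriv_nonneg (convex_Ici 0)
      · exact (Differentiable.continuous fun y => (hfd y).differentiableAt).continuousOn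
      · intro z _
        exact ((hfd z).differentiableAt).differentiableWithinAt
      · intro z hz
        rw [(hfd z).deriv, hderiv_eq z]
        have hz0 : 0 < z := by simpa using hz
        apply mul_nonneg
        · positivity
        · rw [hD]
          simp only [← Finset.sum_sub_distrib]
          apply Finset.sum_nonneg
          intro j _
          rw [div_sub_div_same]
          apply div_nonneg _ (by positivity)
          have : (-z) ^ j ≤ z ^ j := by
            calc (-z) ^ j ≤ |(-z) ^ j| := le_abs_self _
            _ = z ^ j := by rw [abs_pow, abs_neg, abs_of_nonneg hz0.le]
          linarith
    have := hmono (Set.self_mem_Ici) (Set.mem_Ici.mpr hy) hy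
    simpa [hf, Etr_zero, neg_zero] using this
  rcases le_or_gt 0 x with hx | hx
  · exact hmain x hx
  · have := hmain (-x) (by linarith)
    simp only [hf, neg_neg] at this
    calc (1:ℝ) ≤ Etr ℓ (-x) * Etr ℓ x := this
    _ = _ := by rw [mul_comm]; rfl
end

section
/- Let ℓ ≥ 1 and let t be an integer with 1 ≤ t ≤ ℓ and t ≡ ℓ (mod 2). Then Σ_{ν=0}^{ℓ−t} (−1)^{t+ν} / ((ℓ−ν)! (t+ν)!) = ((−1)^t + (−1)^ℓ) / ((t+ℓ) · (t−1)! · ℓ!). -/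
open Finset

lemma aux_alt_sum (n m : ℕ) :
    ∑ k ∈ range (m + 1), (-1 : ℝ) ^ k * (n + 1).choose k = (-1) ^ m * n.choose m := by
  induction m with
  | zero => simp
  | succ m ih =>
    rw [Finset.sum_range_succ, ih, Nat.choose_succ_succ]
    push_cast
    ring

theorem alternating_factorial_sum (ℓ t : ℕ) (hℓ : 1 ≤ ℓ) (ht1 : 1 ≤ t) (ht2 : t ≤ ℓ)
    (hpar : t % 2 = ℓ % 2) :
    ∑ ν ∈ Finset.range (ℓ - t + 1),
        (-1 : ℝ) ^ (t + ν) / (Nat.factorial (ℓ - ν) * Nat.factorial (t + ν)) =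
      ((-1 : ℝ) ^ t + (-1 : ℝ) ^ ℓ) /
        ((t + ℓ) * Nat.factorial (t - 1) * Nat.factorial ℓ) := by
  have key : ∀ ν ∈ range (ℓ - t + 1),
      (-1 : ℝ) ^ (t + ν) / (Nat.factorial (ℓ - ν) * Nat.factorial (t + ν))
        = (-1 : ℝ) ^ (t + ν) * ((t + ℓ).choose (t + ν)) / Nat.factorial (t + ℓ) := by
    intro ν hν
    simp only [mem_range] at hν
    have h1 : t + ν ≤ t + ℓ := by omega
    have h2 : t + ℓ - (t + ν) = ℓ - ν := by omega
    have h3 := Nat.choose_mul_factorial_mul_factorial h1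
    rw [h2] at h3
    have h4 := congrArg (Nat.cast (R := ℝ)) h3
    push_cast at h4
    rw [div_eq_div_iff (by positivity) (by positivity), ← h4]
    ring
  rw [Finset.sum_congr rfl key, ← Finset.sum_div]
  have hshift : ∑ ν ∈ range (ℓ - t + 1),
      (-1 : ℝ) ^ (t + ν) * ((t + ℓ).choose (t + ν))
      = ∑ k ∈ Finset.Ico t (ℓ + 1), (-1 : ℝ) ^ k * ((t + ℓ).choose k) := by
    rw [Finset.sum_Ico_eq_sum_range]
    have : ℓ + 1 - t = ℓ - t + 1 := by omega
    rw [this]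
  rw [hshift, Finset.sum_Ico_eq_sub _ (by omega : t ≤ ℓ + 1)]
  set s := t + ℓ - 1 with hs
  have hs1 : t + ℓ = s + 1 := by omega
  have hts : range t = range ((t - 1) + 1) := by congr 1; omega
  rw [hs1, hts, aux_alt_sum, aux_alt_sum]
  have hsym : (s.choose ℓ : ℝ) = s.choose (t - 1) := by
    have h5 : s - ℓ = t - 1 := by omega
    rw [← h5, Nat.choose_symm (by omega : ℓ ≤ s)]
  rw [hsym]
  have hneg : (-1 : ℝ) ^ (t - 1) = -(-1 : ℝ) ^ t := by
    have : t = (t - 1) + 1 := by omega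
    conv_rhs => rw [this, pow_succ]
    ring
  have hch := Nat.choose_mul_factorial_mul_factorial (by omega : t - 1 ≤ s)
  have h6 : s - (t - 1) = ℓ := by omega
  rw [h6] at hch
  have hch' := congrArg (Nat.cast (R := ℝ)) hch
  push_cast at hch'
  have hfac : (Nat.factorial (s + 1) : ℝ) = (t + ℓ) * Nat.factorial s := by
    have hc : ((s : ℝ) + 1) = (t : ℝ) + ℓ := by exact_mod_cast hs1.symm
    rw [Nat.factorial_succ]
    push_cast
    rw [hc]
  rw [hneg, hfac, ← hch']
  have h7 : (0:ℝ) < Nat.factorial (t-1) := by positivity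
  have h8 : (0:ℝ) < Nat.factorial ℓ := by positivity
  have h9 : (0:ℝ) < (t:ℝ) + ℓ := by positivity
  have h10 : (0:ℝ) < (s.choose (t-1) : ℝ) := by
    exact_mod_cast Nat.choose_pos (by omega : t - 1 ≤ s)
  field_simp
  ring
end

section
/- Define h(x) = (10/9 − (4/3)x² + (1/3)x⁴)². Then: (1) h(x) ≥ 0 for all real x; (2) h(0) = 100/81 > 1; (3) writing h(x) = Σ_i a_i x^i, one has Σ_i a_{2i}·C(i) = 100/81·1 − 80/27·1 + 68/27·2 − 8/9·5 + 1/9·14 = 34/81 < 1/2, where C(i) is the i-th Catalan number (C(0)=1, C(1)=1, C(2)=2, C(3)=5, C(4)=14). -/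
theorem poly_h_properties (h : ℝ → ℝ)
    (hh : ∀ x, h x = (10 / 9 - (4 / 3) * x ^ 2 + (1 / 3) * x ^ 4) ^ 2)
    (a : ℕ → ℝ) (ha : ∀ x, h x = ∑ i ∈ Finset.range 9, a i * x ^ i) :
    (∀ x : ℝ, 0 ≤ h x) ∧
    h 0 = 100 / 81 ∧ (1 : ℝ) < 100 / 81 ∧
    (∑ i ∈ Finset.range 5,
        a (2 * i) * ((Nat.choose (2 * i) i : ℝ) - (Nat.choose (2 * i) (i + 1) : ℝ)))
      = 34 / 81 ∧
    (34 / 81 : ℝ) < 1 / 2 := by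
  have key : ∀ x : ℝ, (10 / 9 - (4 / 3) * x ^ 2 + (1 / 3) * x ^ 4) ^ 2
      = ∑ i ∈ Finset.range 9, a i * x ^ i := fun x => (hh x).symm.trans (ha x)
  have e0 := key 0
  have e1 := key 1
  have em1 := key (-1)
  have e2 := key 2
  have em2 := key (-2)
  have e3 := key 3
  have em3 := key (-3)
  have e4 := key 4
  have em4 := key (-4)
  simp only [Finset.sum_range_succ] at e0 e1 em1 e2 em2 e3 em3 e4 em4
  norm_num at e0 e1 em1 e2 em2 e3 em3 e4 em4
  refine ⟨fun x => (hh x).symm ▸ sq_nonneg _, by rw [hh]; norm_num, by norm_num, ?_, by norm_num⟩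
  simp only [Finset.sum_range_succ]
  norm_num [Nat.choose]
  linarith
end
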